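/- Let n be a nonempty finite type with decidable equality, let ρ : Matrix n n ℂ be positive semidefinite with positive semidefinite square root ρ^{1/2}, and let σ : Matrix n n ℂ be a pseudo-inverse of ρ: σ is positive semidefinite, ρ * σ = σ * ρ, (ρ * σ) * ρ = ρ, and σ * (ρ * σ) = σ. Set P := ρ * σ (the support projection of ρ). Then for all matrices a, b : Matrix n n ℂ, tr(ρ^{1/2} * aᴴ * ρ * b * ρ^{1/2} * σ) = tr(ρ^{1/2} * b * P * aᴴ * ρ^{1/2}). (This is the matrix form of the identity V Δ_ω V† = ρ ⊗ ρ⁻¹ for the modular operator of a not-necessarily-faithful state, equivalently the generalized KMS relation ⟨aω|Δ_ω|bω⟩ = ⟨b†ω|P_ω|a†ω⟩ transported through the GNS isometry V : a|ω⟩ ↦ a ρ^{1/2}.) -/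

import Mathlib

open Matrix ComplexOrder

/-- The positive semidefinite square root of a positive semidefinite matrix
(the definition `Matrix.PosSemidef.sqrt` of the older Mathlib, since removed). -/
noncomputable def Matrix.PosSemidef.sqrt {n 𝕜 : Type*} [Fintype n] [DecidableEq n] [RCLike 𝕜]
    {A : Matrix n n 𝕜} (hA : A.PosSemidef) : Matrix n n 𝕜 :=
  (hA.1.eigenvectorUnitary : Matrix n n 𝕜) *
    diagonal ((↑) ∘ Real.sqrt ∘ hA.1.eigenvalues) *
    (star hA.1.eigenvectorUnitary : Matrix n n 𝕜)

lemma Matrix.PosSemidef.sqrt_mul_self' {n : Type*} [Fintype n] [DecidableEq n]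
    {A : Matrix n n ℂ} (hA : A.PosSemidef) : hA.sqrt * hA.sqrt = A := by
  have hU2 : (star hA.1.eigenvectorUnitary : Matrix n n ℂ) * (hA.1.eigenvectorUnitary : Matrix n n ℂ) = 1 :=
    Matrix.mem_unitaryGroup_iff'.mp hA.1.eigenvectorUnitary.2
  have hAeq : A = (hA.1.eigenvectorUnitary : Matrix n n ℂ) *
      Matrix.diagonal (RCLike.ofReal ∘ hA.1.eigenvalues) *
      (star hA.1.eigenvectorUnitary : Matrix n n ℂ) := hA.1.spectral_theorem
  unfold Matrix.PosSemidef.sqrt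
  conv_rhs => rw [hAeq]
  simp only [Matrix.mul_assoc]
  rw [← Matrix.mul_assoc (star (hA.1.eigenvectorUnitary : Matrix n n ℂ)), hU2, Matrix.one_mul,
    ← Matrix.mul_assoc (Matrix.diagonal _), Matrix.diagonal_mul_diagonal]
  congr 3
  funext i
  simp only [Function.comp_apply]
  rw [← RCLike.ofReal_mul, Real.mul_self_sqrt (hA.eigenvalues_nonneg i)]

/-- If a matrix commutes with `diagonal d`, it commutes with `diagonal e`
whenever `e` is constant on the level sets of `d`. -/
lemma commute_diagonal_transfer {n : Type*} [Fintype n] [DecidableEq n]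
    (M : Matrix n n ℂ) (d e : n → ℂ) (h : ∀ i j, d i = d j → e i = e j)
    (hM : M * Matrix.diagonal d = Matrix.diagonal d * M) :
    M * Matrix.diagonal e = Matrix.diagonal e * M := by
  ext i j
  have h1 : M i j * d j = d i * M i j := by
    have := congrFun (congrFun (congrArg (fun X => (X : Matrix n n ℂ)) hM) i) j
    simpa [Matrix.mul_diagonal, Matrix.diagonal_mul] using this
  rw [Matrix.mul_diagonal, Matrix.diagonal_mul]
  by_cases hd : d i = d j
  · rw [h i j hd, mul_comm]
  · have hz : M i j = 0 := by
      have h0 : M i j * (d j - d i) = 0 := by linear_combination h1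
      rcases mul_eq_zero.mp h0 with h' | h'
      · exact h'
      · exact absurd (sub_eq_zero.mp h').symm hd
    simp [hz]

/-- A matrix commuting with `ρ` commutes with `√ρ`. -/
lemma commute_sqrt {n : Type*} [Fintype n] [DecidableEq n]
    (ρ : Matrix n n ℂ) (hρ : ρ.PosSemidef) (σ : Matrix n n ℂ)
    (hcomm : ρ * σ = σ * ρ) : hρ.sqrt * σ = σ * hρ.sqrt := by
  set U : Matrix n n ℂ := (hρ.1.eigenvectorUnitary : Matrix n n ℂ) with hU
  have hU1 : U * star U = 1 := Matrix.mem_unitaryGroup_iff.mp hρ.1.eigenvectorUnitary.2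
  have hU2 : star U * U = 1 := Matrix.mem_unitaryGroup_iff'.mp hρ.1.eigenvectorUnitary.2
  set d : n → ℂ := RCLike.ofReal ∘ hρ.1.eigenvalues with hd
  set e : n → ℂ := RCLike.ofReal ∘ Real.sqrt ∘ hρ.1.eigenvalues with he
  have hρeq : ρ = U * Matrix.diagonal d * star U := hρ.1.spectral_theorem
  have hsq : hρ.sqrt = U * Matrix.diagonal e * star U := rfl
  set M : Matrix n n ℂ := star U * σ * U with hM
  have hMd : M * Matrix.diagonal d = Matrix.diagonal d * M := by
    calc M * Matrix.diagonal d
        = star U * (σ * (U * Matrix.diagonal d * star U)) * U := by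
          simp only [hM, Matrix.mul_assoc]
          rw [hU2, Matrix.mul_one]
      _ = star U * ((U * Matrix.diagonal d * star U) * σ) * U := by
          rw [← hρeq, ← hcomm]
      _ = Matrix.diagonal d * M := by
          simp only [hM, Matrix.mul_assoc]
          rw [← Matrix.mul_assoc (star U) U, hU2, Matrix.one_mul]
  have hMe : M * Matrix.diagonal e = Matrix.diagonal e * M :=
    commute_diagonal_transfer M d e
      (fun i j hij => by
        have : hρ.1.eigenvalues i = hρ.1.eigenvalues j := by
          simpa [hd, Complex.ofReal_inj] using hij
        simp [he, this]) hMd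
  have hσeq : σ = U * M * star U := by
    simp only [hM, Matrix.mul_assoc]
    rw [← Matrix.mul_assoc U (star U), hU1, Matrix.one_mul, Matrix.mul_one]
  calc hρ.sqrt * σ
      = U * (Matrix.diagonal e * M) * star U := by
        rw [hsq, hσeq]
        simp only [Matrix.mul_assoc]
        rw [← Matrix.mul_assoc (star U) U, hU2, Matrix.one_mul]
    _ = U * (M * Matrix.diagonal e) * star U := by rw [hMe]
    _ = σ * hρ.sqrt := by
        rw [hsq, hσeq]
        simp only [Matrix.mul_assoc]
        rw [← Matrix.mul_assoc (star U) U, hU2, Matrix.one_mul]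

/-- Matrix form of `V Δ_ω V† = ρ ⊗ ρ⁻¹` / the generalized KMS relation
`⟨aω|Δ_ω|bω⟩ = ⟨b†ω|P_ω|a†ω⟩` for a not-necessarily-faithful state: if `σ`
is a positive semidefinite pseudo-inverse of `ρ` and `P = ρσ` is the support
projection, then `tr(√ρ aᴴ ρ b √ρ σ) = tr(√ρ b P aᴴ √ρ)` for all `a, b`. -/
theorem modular_operator_transport
    (n : Type*) [Fintype n] [DecidableEq n] [Nonempty n]
    (ρ : Matrix n n ℂ) (hρ : ρ.PosSemidef)
    (σ : Matrix n n ℂ) (hσ : σ.PosSemidef)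
    (hcomm : ρ * σ = σ * ρ)
    (h1 : (ρ * σ) * ρ = ρ) (h2 : σ * (ρ * σ) = σ)
    (P : Matrix n n ℂ) (hP : P = ρ * σ)
    (a b : Matrix n n ℂ) :
    (hρ.sqrt * aᴴ * ρ * b * hρ.sqrt * σ).trace =
      (hρ.sqrt * b * P * aᴴ * hρ.sqrt).trace := by
  have hs : hρ.sqrt * σ = σ * hρ.sqrt := commute_sqrt ρ hρ σ hcomm
  have hss : hρ.sqrt * hρ.sqrt = ρ := hρ.sqrt_mul_self'
  have key2 : hρ.sqrt * σ * hρ.sqrt = ρ * σ := by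
    rw [hs, Matrix.mul_assoc, hss, ← hcomm]
  have L : (hρ.sqrt * aᴴ * ρ * b * hρ.sqrt * σ).trace
      = ((aᴴ * (ρ * b)) * (ρ * σ)).trace := by
    have e3 : hρ.sqrt * aᴴ * ρ * b * hρ.sqrt * σ
        = (hρ.sqrt * (aᴴ * (ρ * b))) * (hρ.sqrt * σ) := by
      simp [Matrix.mul_assoc]
    rw [e3, Matrix.trace_mul_comm, ← Matrix.mul_assoc, key2, Matrix.trace_mul_comm]
  have R : (hρ.sqrt * b * P * aᴴ * hρ.sqrt).trace
      = ((aᴴ * (ρ * b)) * (ρ * σ)).trace := by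
    have e1 : hρ.sqrt * b * P * aᴴ * hρ.sqrt
        = (hρ.sqrt * (b * (P * aᴴ))) * hρ.sqrt := by simp [Matrix.mul_assoc]
    rw [e1, Matrix.trace_mul_comm, ← Matrix.mul_assoc, hss, hP]
    rw [show ρ * (b * (ρ * σ * aᴴ)) = (ρ * (b * (ρ * σ))) * aᴴ from by
      simp [Matrix.mul_assoc]]
    rw [Matrix.trace_mul_comm]
    -- tr(aᴴ * (ρ * (b * (ρ * σ))))
    have : aᴴ * (ρ * (b * (ρ * σ))) = (aᴴ * (ρ * b)) * (ρ * σ) := by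
      simp [Matrix.mul_assoc]
    rw [this]
  rw [L, R]
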